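/- For every integer m ≥ 1 there exists an integer N such that for every family of N lines in ℝ² that are pairwise non-parallel and such that no three of them pass through a common point, there exist m lines ℓ_1, …, ℓ_m of the family and, for each i, an injective affine parametrization γ_i : ℝ → ℝ² with image ℓ_i, such that for all j < k with j, k ≠ i, the parameter of the point ℓ_i ∩ ℓ_j is smaller than the parameter of the point ℓ_i ∩ ℓ_k. -/

import Mathlib

noncomputable section

/-- The Euclidean plane. -/
abbrev E2 := EuclideanSpace ℝ (Fin 2)

/-- A line in the plane: the image of an injective affine parametrization. -/
def IsLine (L : Set E2) : Prop :=
  ∃ p v : E2, v ≠ 0 ∧ L = {x : E2 | ∃ t : ℝ, x = p + t • v}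

def Btwn (S : Finset ℕ) (σ : ℕ → ℕ → ℝ) : Prop :=
  ∀ i ∈ S, ∀ j ∈ S, ∀ k ∈ S, i < j → j < k →
    (σ i j < σ i k ∧ σ i k < σ j k) ∨ (σ j k < σ i k ∧ σ i k < σ i j)

/-- A chain ("cup" for `R = (<)`, "cap" for `R = (>)`) of length `r` inside `S`. -/
def Chn (σ : ℕ → ℕ → ℝ) (R : ℝ → ℝ → Prop) (S : Finset ℕ) (r : ℕ) (g : ℕ → ℕ) : Prop :=
  (∀ a b, a < b → b < r → g a < g b) ∧ (∀ a, a < r → g a ∈ S) ∧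
  (∀ a, a + 2 < r → R (σ (g a) (g (a+1))) (σ (g (a+1)) (g (a+2))))

lemma chn_mono {σ R S T r g} (h : Chn σ R S r g) (hST : S ⊆ T) : Chn σ R T r g :=
  ⟨h.1, fun a ha => hST (h.2.1 a ha), h.2.2⟩

lemma btw_mono {S T σ} (h : Btwn T σ) (hST : S ⊆ T) : Btwn S σ :=
  fun i hi j hj k hk => h i (hST hi) j (hST hj) k (hST hk)

lemma chn_two {σ R S r} (hr : r ≤ 2) {i j : ℕ} (hi : i ∈ S) (hj : j ∈ S) (hij : i < j) :
    Chn σ R S r (fun a => if a = 0 then i else j) := by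
  refine ⟨fun a b hab hbr => ?_, fun a har => ?_, fun a har => by omega⟩
  · have : a = 0 ∧ b = 1 := by omega
    simp [this.1, this.2, hij]
  · by_cases h : a = 0 <;> simp [h, hi, hj]

lemma cupcap (k l : ℕ) : ∃ n : ℕ, 2 ≤ n ∧ ∀ (S : Finset ℕ) (σ : ℕ → ℕ → ℝ),
    n ≤ S.card → Btwn S σ →
    (∃ g, Chn σ (· < ·) S k g) ∨ (∃ g, Chn σ (· > ·) S l g) := by
  classical
  obtain ⟨p, hp⟩ : ∃ p, k + l ≤ p := ⟨k + l, le_rfl⟩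
  induction p generalizing k l with
  | zero =>
      refine ⟨2, le_rfl, fun S σ hcard hB => ?_⟩
      obtain ⟨i, hi, j, hj, hij⟩ := Finset.one_lt_card.mp (show 1 < S.card by omega)
      rcases hij.lt_or_gt with h | h
      · exact Or.inl ⟨_, chn_two (by omega) hi hj h⟩
      · exact Or.inl ⟨_, chn_two (by omega) hj hi h⟩
  | succ p ih =>
      by_cases hk : k ≤ 2
      · refine ⟨2, le_rfl, fun S σ hcard hB => ?_⟩
        obtain ⟨i, hi, j, hj, hij⟩ := Finset.one_lt_card.mp (show 1 < S.card by omega)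
        rcases hij.lt_or_gt with h | h
        · exact Or.inl ⟨_, chn_two hk hi hj h⟩
        · exact Or.inl ⟨_, chn_two hk hj hi h⟩
      by_cases hl : l ≤ 2
      · refine ⟨2, le_rfl, fun S σ hcard hB => ?_⟩
        obtain ⟨i, hi, j, hj, hij⟩ := Finset.one_lt_card.mp (show 1 < S.card by omega)
        rcases hij.lt_or_gt with h | h
        · exact Or.inr ⟨_, chn_two hl hi hj h⟩
        · exact Or.inr ⟨_, chn_two hl hj hi h⟩
      push_neg at hk hl
      obtain ⟨n1, hn1, H1⟩ := ih (k-1) l (by omega)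
      obtain ⟨n2, hn2, H2⟩ := ih k (l-1) (by omega)
      refine ⟨n1 + n2, by omega, fun S σ hcard hB => ?_⟩
      set E : Finset ℕ := S.filter (fun q => ∃ g, Chn σ (· < ·) S (k-1) g ∧ g (k-2) = q) with hE
      have hES : E ⊆ S := Finset.filter_subset _ _
      -- (S \ E) has small card, else done
      rcases lt_or_ge ((S \ E).card) n1 with hsmall | hbig
      swap
      · rcases H1 (S \ E) σ hbig (btw_mono hB (Finset.sdiff_subset)) with ⟨g, hg⟩ | ⟨g, hg⟩
        · exfalso
          have hlast : g (k-2) ∈ S \ E := hg.2.1 (k-2) (by omega)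
          have : g (k-2) ∈ E := by
            rw [hE, Finset.mem_filter]
            exact ⟨(Finset.sdiff_subset) hlast, g, chn_mono hg Finset.sdiff_subset, rfl⟩
          exact (Finset.mem_sdiff.mp hlast).2 this
        · exact Or.inr ⟨g, chn_mono hg Finset.sdiff_subset⟩
      have hEcard : n2 ≤ E.card := by
        have h1 : S.card ≤ (S \ E).card + E.card := by
          have := Finset.card_union_le (S \ E) E
          have h2 : S ⊆ (S \ E) ∪ E := by
            intro x hx
            by_cases hxE : x ∈ E
            · exact Finset.mem_union_right _ hxE
            · exact Finset.mem_union_left _ (Finset.mem_sdiff.mpr ⟨hx, hxE⟩)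
          calc S.card ≤ ((S \ E) ∪ E).card := Finset.card_le_card h2
            _ ≤ _ := this
        omega
      rcases H2 E σ hEcard (btw_mono hB hES) with ⟨g, hg⟩ | ⟨h, hh⟩
      · exact Or.inl ⟨g, chn_mono hg hES⟩
      -- h is an (l-1)-cap in E; h 0 is the endpoint of a (k-1)-cup in S
      have hh0E : h 0 ∈ E := hh.2.1 0 (by omega)
      rw [hE, Finset.mem_filter] at hh0E
      obtain ⟨hh0S, g, hg, hglast⟩ := hh0E
      -- key points
      have hu'lt : g (k-3) < h 0 := by
        rw [← hglast]; exact hg.1 (k-3) (k-2) (by omega) (by omega)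
      have hh01 : h 0 < h 1 := hh.1 0 1 (by omega) (by omega)
      have hu'S : g (k-3) ∈ S := hg.2.1 (k-3) (by omega)
      have hh1S : h 1 ∈ S := hES (hh.2.1 1 (by omega))
      rcases hB _ hu'S _ hh0S _ hh1S hu'lt hh01 with hcase | hcase
      · -- σ u' h0 < σ h0 h1 : extend the cup at the end
        have hkey : σ (g (k-3)) (h 0) < σ (h 0) (h 1) := lt_trans hcase.1 hcase.2
        refine Or.inl ⟨fun a => if a + 1 < k then g a else h 1, ?_, ?_, ?_⟩
        · intro a b hab hbk
          by_cases hb : b + 1 < k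
          · have ha : a + 1 < k := by omega
            simp only [ha, hb, if_pos]
            exact hg.1 a b hab (by omega)
          · have ha : a + 1 < k := by omega
            dsimp only; rw [if_pos ha, if_neg hb]
            have hgh0 : g a ≤ h 0 := by
              rw [← hglast]
              rcases Nat.lt_or_ge a (k-2) with h' | h'
              · exact le_of_lt (hg.1 a (k-2) h' (by omega))
              · have : a = k - 2 := by omega
                rw [this]
            omega
        · intro a hak
          by_cases ha : a + 1 < k
          · simp only [ha, if_pos]; exact hg.2.1 a (by omega)
          · simp only [ha, if_neg]; exact hh1S
        · intro a hak
          by_cases ha : a + 3 < k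
          · have h1' : a + 1 + 1 < k := by omega
            have h2' : a + 2 + 1 < k := by omega
            simp only [show a + 1 < k by omega, h1', h2', if_pos]
            exact hg.2.2 a (by omega)
          · have haeq : a = k - 3 := by omega
            have h1' : a + 1 + 1 < k := by omega
            have h2' : ¬ (a + 2 + 1 < k) := by omega
            simp only [show a + 1 < k by omega, h1', if_pos, h2', if_neg]
            have : g (a + 1) = h 0 := by rw [← hglast]; congr 1; omega
            rw [this, haeq]
            exact hkey
      · -- σ h0 h1 < σ u' h0 : prepend to the cap
        have hkey : σ (h 0) (h 1) < σ (g (k-3)) (h 0) := lt_trans hcase.1 hcase.2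
        refine Or.inr ⟨fun a => if a = 0 then g (k-3) else h (a-1), ?_, ?_, ?_⟩
        · intro a b hab hbl
          by_cases ha : a = 0
          · simp only [ha, if_pos, show ¬ (b = 0) by omega, if_neg]
            rcases Nat.lt_or_ge 1 b with h' | h'
            · exact lt_trans hu'lt (by
                have := hh.1 0 (b-1) (by omega) (by omega)
                exact this)
            · have : b = 1 := by omega
              simp [this, hu'lt]
          · simp only [ha, if_neg, show ¬ (b = 0) by omega, if_neg]
            exact hh.1 (a-1) (b-1) (by omega) (by omega)
        · intro a hal
          by_cases ha : a = 0
          · simp only [ha, if_pos]; exact hu'S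
          · simp only [ha, if_neg]; exact hES (hh.2.1 (a-1) (by omega))
        · intro a hal
          by_cases ha : a = 0
          · simp only [ha, if_pos, if_neg (by omega : ¬ (1 : ℕ) = 0),
              if_neg (by omega : ¬ (2 : ℕ) = 0)]
            simpa [ha] using hkey
          · simp only [ha, if_neg, if_neg (by omega : ¬ a + 1 = 0),
              if_neg (by omega : ¬ a + 2 = 0)]
            have e1 : a + 1 - 1 = (a-1) + 1 := by omega
            have e2 : a + 2 - 1 = (a-1) + 2 := by omega
            rw [e1, e2]
            exact hh.2.2 (a-1) (by omega)

lemma chn_full {σ S r g} (hB : Btwn S σ) (hg : Chn σ (· < ·) S r g) :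
    ∀ a b c, a < b → b < c → c < r → σ (g a) (g b) < σ (g b) (g c) := by
  have key : ∀ d a b c, c - a ≤ d → a < b → b < c → c < r →
      σ (g a) (g b) < σ (g b) (g c) := by
    intro d
    induction d with
    | zero => intro a b c h1 h2 h3 h4; omega
    | succ d IH =>
      intro a b c hd hab hbc hcr
      by_cases hcons : c = a + 2
      · have hb : b = a + 1 := by omega
        rw [hb, hcons]
        exact hg.2.2 a (by omega)
      rcases Nat.lt_or_ge (b+1) c with hb1 | hb1
      · -- b + 1 < c : use (a,b,c-1) and (b,c-1,c)
        have h1 : σ (g a) (g b) < σ (g b) (g (c-1)) := IH a b (c-1) (by omega) hab (by omega) (by omega)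
        have h2 : σ (g b) (g (c-1)) < σ (g (c-1)) (g c) := IH b (c-1) c (by omega) (by omega) (by omega) (by omega)
        have hm1 : g b < g (c-1) := hg.1 b (c-1) (by omega) (by omega)
        have hm2 : g (c-1) < g c := hg.1 (c-1) c (by omega) hcr
        rcases hB _ (hg.2.1 b (by omega)) _ (hg.2.1 (c-1) (by omega)) _ (hg.2.1 c hcr) hm1 hm2
          with hc | hc
        · linarith [hc.1]
        · linarith [hc.1, hc.2]
      · -- b = c - 1, and a + 1 < b
        have hb : b + 1 = c := by omega
        have hab1 : a + 1 < b := by omega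
        have h1 : σ (g a) (g (a+1)) < σ (g (a+1)) (g b) := IH a (a+1) b (by omega) (by omega) hab1 (by omega)
        have h2 : σ (g (a+1)) (g b) < σ (g b) (g c) := IH (a+1) b c (by omega) hab1 hbc hcr
        have hm1 : g a < g (a+1) := hg.1 a (a+1) (by omega) (by omega)
        have hm2 : g (a+1) < g b := hg.1 (a+1) b hab1 (by omega)
        rcases hB _ (hg.2.1 a (by omega)) _ (hg.2.1 (a+1) (by omega)) _ (hg.2.1 b (by omega)) hm1 hm2
          with hc | hc
        · linarith [hc.2]
        · linarith [hc.1, hc.2]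
  exact fun a b c h1 h2 h3 => key (c - a) a b c le_rfl h1 h2 h3

/-- For a cup, the slope from a fixed element to the others is increasing in the label. -/
lemma chn_ord {σ S r g} (hσ : ∀ i j, σ i j = σ j i) (hB : Btwn S σ)
    (hg : Chn σ (· < ·) S r g) :
    ∀ i j k, i < r → j < r → k < r → j < k → j ≠ i → k ≠ i →
      σ (g i) (g j) < σ (g i) (g k) := by
  intro i j k hir hjr hkr hjk hji hki
  have mem : ∀ a, a < r → g a ∈ S := hg.2.1
  rcases Nat.lt_or_ge i j with hij | hij
  · -- i < j < k
    have F := chn_full hB hg i j k hij hjk hkr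
    rcases hB _ (mem i hir) _ (mem j hjr) _ (mem k hkr) (hg.1 i j hij hjr) (hg.1 j k hjk hkr)
      with hc | hc
    · exact hc.1
    · linarith [hc.1, hc.2]
  rcases Nat.lt_or_ge i k with hik | hik
  · -- j < i < k
    have hji' : j < i := by omega
    have F := chn_full hB hg j i k hji' hik hkr
    rw [hσ (g i) (g j)]
    exact F
  · -- j < k < i
    have hki' : k < i := by omega
    have F := chn_full hB hg j k i hjk hki' hir
    rcases hB _ (mem j hjr) _ (mem k hkr) _ (mem i hir) (hg.1 j k hjk hkr) (hg.1 k i hki' hir)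
      with hc | hc
    · rw [hσ (g i) (g j), hσ (g i) (g k)]
      linarith [hc.1, hc.2]
    · linarith [hc.1, hc.2, hσ (g j) (g i) ▸ hc.1]

lemma btwn_neg {S σ} (h : Btwn S σ) : Btwn S (fun i j => -σ i j) := by
  intro i hi j hj k hk hij hjk
  rcases h i hi j hj k hk hij hjk with hc | hc
  · exact Or.inr ⟨by dsimp only; linarith [hc.1], by dsimp only; linarith [hc.2]⟩
  · exact Or.inl ⟨by dsimp only; linarith [hc.2], by dsimp only; linarith [hc.1]⟩

lemma chn_neg {σ S r g} (h : Chn σ (· > ·) S r g) : Chn (fun i j => -σ i j) (· < ·) S r g := by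
  refine ⟨h.1, h.2.1, fun a ha => ?_⟩
  have := h.2.2 a ha
  simp only [gt_iff_lt] at this ⊢
  linarith

/-- For a cap, the slope from a fixed element is decreasing in the label. -/
lemma chn_ord' {σ S r g} (hσ : ∀ i j, σ i j = σ j i) (hB : Btwn S σ)
    (hg : Chn σ (· > ·) S r g) :
    ∀ i j k, i < r → j < r → k < r → j < k → j ≠ i → k ≠ i →
      σ (g i) (g k) < σ (g i) (g j) := by
  intro i j k hir hjr hkr hjk hji hki
  have := chn_ord (σ := fun i j => -σ i j) (fun i j => by simp [hσ i j])
    (btwn_neg hB) (chn_neg hg) i j k hir hjr hkr hjk hji hki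
  simpa using this

def pt (x y : ℝ) : E2 := WithLp.toLp 2 ![x, y]

@[simp] lemma pt_zero (x y : ℝ) : pt x y 0 = x := rfl
@[simp] lemma pt_one (x y : ℝ) : pt x y 1 = y := rfl

lemma e2_apply (q w : E2) (t : ℝ) (n : Fin 2) : (q + t • w) n = q n + t * w n := by
  simp [PiLp.add_apply, PiLp.smul_apply, smul_eq_mul]

lemma e2_ext {q w : E2} (h0 : q 0 = w 0) (h1 : q 1 = w 1) : q = w := by
  ext i; fin_cases i <;> assumption

lemma graph_iff (p v : E2) (hv0 : v 0 ≠ 0) (z : E2) :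
    (∃ t : ℝ, z = p + t • v) ↔ z 1 = (v 1 / v 0) * z 0 + (p 1 - (v 1 / v 0) * p 0) := by
  constructor
  · rintro ⟨t, rfl⟩
    rw [e2_apply, e2_apply]
    field_simp
    ring
  · intro hz
    refine ⟨(z 0 - p 0) / v 0, e2_ext ?_ ?_⟩
    · rw [e2_apply]; field_simp; ring
    · rw [e2_apply, hz]; field_simp; ring

lemma slope_btwn {a1 a2 a3 b1 b2 b3 : ℝ} (h12 : a1 < a2) (h23 : a2 < a3) :
    ((b2-b1)/(a2-a1) < (b3-b2)/(a3-a2) →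
      ((b2-b1)/(a2-a1) < (b3-b1)/(a3-a1) ∧ (b3-b1)/(a3-a1) < (b3-b2)/(a3-a2))) ∧
    ((b3-b2)/(a3-a2) < (b2-b1)/(a2-a1) →
      ((b3-b2)/(a3-a2) < (b3-b1)/(a3-a1) ∧ (b3-b1)/(a3-a1) < (b2-b1)/(a2-a1))) := by
  set s12 := (b2-b1)/(a2-a1) with hs12
  set s23 := (b3-b2)/(a3-a2) with hs23
  set s13 := (b3-b1)/(a3-a1) with hs13
  have d1 : (0:ℝ) < a2 - a1 := by linarith
  have d2 : (0:ℝ) < a3 - a2 := by linarith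
  have d3 : (0:ℝ) < a3 - a1 := by linarith
  have e1 : b2 - b1 = s12 * (a2 - a1) := by rw [hs12]; field_simp
  have e2 : b3 - b2 = s23 * (a3 - a2) := by rw [hs23]; field_simp
  have e3 : b3 - b1 = s13 * (a3 - a1) := by rw [hs13]; field_simp
  have key : s13 * (a3 - a1) = s12 * (a2 - a1) + s23 * (a3 - a2) := by linarith
  constructor
  · intro h
    constructor <;> nlinarith [mul_pos d1 d2, mul_pos d2 d3, mul_pos d1 d3]
  · intro h
    constructor <;> nlinarith [mul_pos d1 d2, mul_pos d2 d3, mul_pos d1 d3]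


/-- For every `m ≥ 1` there is an `N` such that every family of `N` lines in the plane,
pairwise non-parallel (any two meeting in exactly one point) and with no three concurrent,
contains `m` lines `ℓ 1, …, ℓ m` admitting injective affine parametrizations `γ i` of `ℓ i`
such that, for all `j < k` distinct from `i`, the parameter of the point `ℓ i ∩ ℓ j` is
smaller than the parameter of the point `ℓ i ∩ ℓ k` (a cyclic subarrangement of size `m`). -/
theorem stmt9 (m : ℕ) (hm : 1 ≤ m) :
    ∃ N : ℕ, ∀ L : Fin N → Set E2,
      (∀ i, IsLine (L i)) →
      (∀ i j : Fin N, i ≠ j → ∃! x : E2, x ∈ L i ∩ L j) →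
      (∀ i j k : Fin N, i ≠ j → i ≠ k → j ≠ k →
        ∀ x : E2, ¬ (x ∈ L i ∧ x ∈ L j ∧ x ∈ L k)) →
      ∃ f : Fin m → Fin N, Function.Injective f ∧
        ∃ γ : Fin m → ℝ → E2,
          (∀ i : Fin m, Function.Injective (γ i) ∧
            (∃ p v : E2, ∀ t : ℝ, γ i t = p + t • v) ∧
            Set.range (γ i) = L (f i)) ∧
          (∀ i j k : Fin m, j < k → j ≠ i → k ≠ i →
            ∀ s t : ℝ, γ i s ∈ L (f j) → γ i t ∈ L (f k) → s < t) := by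
  classical
  obtain ⟨n0, hn0two, HCC⟩ := cupcap m m
  refine ⟨n0 + 1, fun L hline huniq hcon => ?_⟩
  choose p v hv hL using hline
  -- no two lines are parallel
  have nonpar : ∀ i j : Fin (n0+1), i ≠ j → ∀ c : ℝ, v j ≠ c • v i := by
    intro i j hij c hc
    obtain ⟨x, hx, hxu⟩ := huniq i j hij
    have hx' : x + v j ∈ L i ∩ L j := by
      constructor
      · obtain ⟨t, ht⟩ := (hL i ▸ hx.1 : x ∈ {x : E2 | ∃ t : ℝ, x = p i + t • v i})
        rw [hL i]
        exact ⟨t + c, by rw [ht, hc, add_smul]; abel⟩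
      · obtain ⟨s, hs⟩ := (hL j ▸ hx.2 : x ∈ {x : E2 | ∃ t : ℝ, x = p j + t • v j})
        rw [hL j]
        exact ⟨s + 1, by rw [hs, add_smul, one_smul]; abel⟩
    have : x + v j = x := by rw [hxu _ hx', hxu _ hx]
    exact hv j (by simpa using this)
  -- at most one vertical line
  have vert : ∀ i j : Fin (n0+1), i ≠ j → v i 0 = 0 → v j 0 = 0 → False := by
    intro i j hij hi0 hj0
    have hvi1 : v i 1 ≠ 0 := by
      intro h1
      exact hv i (e2_ext (by simpa using hi0) (by simpa using h1))
    refine nonpar i j hij (v j 1 / v i 1) (e2_ext ?_ ?_)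
    · rw [PiLp.smul_apply, smul_eq_mul, hi0, hj0, mul_zero]
    · rw [PiLp.smul_apply, smul_eq_mul]; field_simp
  set G : Finset (Fin (n0+1)) := Finset.univ.filter (fun i => v i 0 ≠ 0) with hG
  have hGcard : n0 ≤ G.card := by
    have hV : (Finset.univ.filter (fun i : Fin (n0+1) => ¬ (v i 0 ≠ 0))).card ≤ 1 := by
      apply Finset.card_le_one.mpr
      intro x hx y hy
      simp only [Finset.mem_filter, not_not] at hx hy
      by_contra hxy
      exact vert x y hxy hx.2 hy.2
    have := Finset.card_filter_add_card_filter_not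
      (s := (Finset.univ : Finset (Fin (n0+1)))) (p := fun i => v i 0 ≠ 0)
    rw [Finset.card_univ, Fintype.card_fin] at this
    rw [hG]
    omega
  set a : Fin (n0+1) → ℝ := fun i => v i 1 / v i 0 with ha
  set b : Fin (n0+1) → ℝ := fun i => p i 1 - a i * p i 0 with hb
  have graph : ∀ i, v i 0 ≠ 0 → ∀ z : E2, z ∈ L i ↔ z 1 = a i * z 0 + b i := by
    intro i hvi z
    rw [hL i]
    exact graph_iff (p i) (v i) hvi z
  have hane : ∀ i j, i ≠ j → v i 0 ≠ 0 → v j 0 ≠ 0 → a i ≠ a j := by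
    intro i j hij hvi hvj heq
    refine nonpar i j hij (v j 0 / v i 0) (e2_ext ?_ ?_)
    · rw [PiLp.smul_apply, smul_eq_mul]; field_simp
    · rw [PiLp.smul_apply, smul_eq_mul]
      rw [ha] at heq
      field_simp at heq ⊢
      linarith
  -- crossing point x-coordinate
  have cross : ∀ i j, i ≠ j → v i 0 ≠ 0 → v j 0 ≠ 0 →
      ∀ z : E2, z ∈ L i → z ∈ L j → z 0 = (b j - b i) / (a i - a j) := by
    intro i j hij hvi hvj z hzi hzj
    have h1 := (graph i hvi z).mp hzi
    have h2 := (graph j hvj z).mp hzj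
    rw [eq_div_iff (sub_ne_zero.mpr (hane i j hij hvi hvj))]
    linear_combination h2 - h1
  set σ : Fin (n0+1) → Fin (n0+1) → ℝ := fun i j => (b j - b i) / (a j - a i) with hσ
  have hcross' : ∀ i j, i ≠ j → v i 0 ≠ 0 → v j 0 ≠ 0 →
      ∀ z : E2, z ∈ L i → z ∈ L j → z 0 = - σ i j := by
    intro i j hij hvi hvj z hzi hzj
    rw [cross i j hij hvi hvj z hzi hzj, hσ]
    rw [show a i - a j = -(a j - a i) by ring, div_neg]
  have hσsymm : ∀ i j, σ i j = σ j i := by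
    intro i j
    show (b j - b i) / (a j - a i) = (b i - b j) / (a i - a j)
    rw [show b i - b j = -(b j - b i) by ring, show a i - a j = -(a j - a i) by ring,
      neg_div_neg_eq]
  -- general position: distinct slopes of crossing points on a common line
  have gen : ∀ i j k, i ≠ j → j ≠ k → i ≠ k →
      v i 0 ≠ 0 → v j 0 ≠ 0 → v k 0 ≠ 0 → σ i j ≠ σ j k := by
    intro i j k hij hjk hik hvi hvj hvk heq
    obtain ⟨P, hP, -⟩ := huniq i j hij
    obtain ⟨Q, hQ, -⟩ := huniq j k hjk
    have hP0 : P 0 = - σ i j := hcross' i j hij hvi hvj P hP.1 hP.2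
    have hQ0 : Q 0 = - σ j k := hcross' j k hjk hvj hvk Q hQ.1 hQ.2
    have h0 : P 0 = Q 0 := by rw [hP0, hQ0, heq]
    have h1 : P 1 = Q 1 := by
      rw [(graph j hvj P).mp hP.2, (graph j hvj Q).mp hQ.1, h0]
    have hPQ : P = Q := e2_ext h0 h1
    exact hcon i j k hij hik hjk P ⟨hP.1, hP.2, hPQ ▸ hQ.2⟩
  -- sort the nonvertical lines by slope
  set A : Finset ℝ := G.image a with hA
  have hainj : Set.InjOn a G := by
    intro x hx y hy hxy
    by_contra hne
    rw [hG, Finset.mem_coe, Finset.mem_filter] at hx hy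
    exact hane x y hne hx.2 hy.2 hxy
  have hAcard : A.card = G.card := Finset.card_image_of_injOn hainj
  set e := A.orderIsoOfFin rfl with he
  have hsel : ∀ t : Fin A.card, ∃ i, i ∈ G ∧ a i = (e t : ℝ) := by
    intro t
    have h2 : ((e t : ℝ)) ∈ G.image a := by rw [← hA]; exact (e t).2
    obtain ⟨i, hi, hai⟩ := Finset.mem_image.mp h2
    exact ⟨i, hi, hai⟩
  choose sel hselG hsela using hsel
  set idx : ℕ → Fin (n0+1) := fun t => if h : t < A.card then sel ⟨t, h⟩ else 0 with hidx
  have hidxG : ∀ t, t < A.card → idx t ∈ G := by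
    intro t ht; rw [hidx]; simp only [dif_pos ht]; exact hselG _
  have hidxv : ∀ t, t < A.card → v (idx t) 0 ≠ 0 := by
    intro t ht
    have := hidxG t ht
    rw [hG, Finset.mem_filter] at this
    exact this.2
  have hidxa : ∀ t u, t < u → u < A.card → a (idx t) < a (idx u) := by
    intro t u htu hu
    have ht : t < A.card := lt_trans htu hu
    rw [hidx]
    simp only [dif_pos ht, dif_pos hu]
    rw [hsela ⟨t, ht⟩, hsela ⟨u, hu⟩]
    exact Subtype.coe_lt_coe.mpr (e.strictMono (by exact Fin.mk_lt_mk.mpr htu))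
  have hidxne : ∀ t u, t < u → u < A.card → idx t ≠ idx u := by
    intro t u htu hu heq
    exact absurd (heq ▸ hidxa t u htu hu) (lt_irrefl _)
  -- the dual slope function and its betweenness property
  set σ' : ℕ → ℕ → ℝ := fun t u => σ (idx t) (idx u) with hσ'
  have hσ'symm : ∀ t u, σ' t u = σ' u t := fun t u => hσsymm _ _
  have hBtwn : Btwn (Finset.range A.card) σ' := by
    intro t ht u hu w hw htu huw
    rw [Finset.mem_range] at ht hu hw
    have h12 : a (idx t) < a (idx u) := hidxa t u htu hu
    have h23 : a (idx u) < a (idx w) := hidxa u w huw hw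
    have hne1 : idx t ≠ idx u := hidxne t u htu hu
    have hne2 : idx u ≠ idx w := hidxne u w huw hw
    have hne3 : idx t ≠ idx w := hidxne t w (lt_trans htu huw) hw
    have hgen : σ (idx t) (idx u) ≠ σ (idx u) (idx w) :=
      gen _ _ _ hne1 hne2 hne3 (hidxv t ht) (hidxv u hu) (hidxv w hw)
    have hsb := slope_btwn (a1 := a (idx t)) (a2 := a (idx u)) (a3 := a (idx w))
      (b1 := b (idx t)) (b2 := b (idx u)) (b3 := b (idx w)) h12 h23
    rcases lt_or_gt_of_ne hgen with h | h
    · exact Or.inl (hsb.1 h)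
    · exact Or.inr (hsb.2 h)
  have hcardA : n0 ≤ (Finset.range A.card).card := by
    rw [Finset.card_range, hAcard]; exact hGcard
  rcases HCC (Finset.range A.card) σ' hcardA hBtwn with ⟨g, hg⟩ | ⟨g, hg⟩
  · -- cup case: parametrize with decreasing x-coordinate
    have hgval : ∀ i : Fin m, g i.val < A.card := by
      intro i
      have := hg.2.1 i.val i.isLt
      rwa [Finset.mem_range] at this
    set f : Fin m → Fin (n0+1) := fun i => idx (g i.val) with hf
    have hfinj : Function.Injective f := by
      intro i j hij
      by_contra hne
      rcases Ne.lt_or_gt hne with h | h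
      · exact hidxne _ _ (hg.1 _ _ h (Fin.is_lt j)) (hgval j) hij
      · exact hidxne _ _ (hg.1 _ _ h (Fin.is_lt i)) (hgval i) hij.symm
    have hfv : ∀ i, v (f i) 0 ≠ 0 := fun i => hidxv _ (hgval i)
    refine ⟨f, hfinj, fun i t' => pt (-t') (a (f i) * (-t') + b (f i)), ?_, ?_⟩
    · intro i
      refine ⟨?_, ⟨pt 0 (b (f i)), pt (-1) (-(a (f i))), fun t => e2_ext ?_ ?_⟩, ?_⟩
      · intro s t hst
        have := congrArg (fun z : E2 => z 0) hst
        simp only [pt_zero] at this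
        linarith
      · rw [e2_apply]; simp only [pt_zero]; ring
      · rw [e2_apply]; simp only [pt_one]; ring
      · ext z
        simp only [Set.mem_range]
        constructor
        · rintro ⟨t, rfl⟩
          rw [graph (f i) (hfv i)]
          simp only [pt_zero, pt_one]
        · intro hz
          refine ⟨-(z 0), e2_ext ?_ ?_⟩
          · simp only [pt_zero, neg_neg]
          · simp only [pt_one, neg_neg]
            exact ((graph (f i) (hfv i) z).mp hz).symm
    · intro i j k hjk hji hki s t hs ht
      have hfij : f i ≠ f j := fun h => hji (hfinj h).symm
      have hfik : f i ≠ f k := fun h => hki (hfinj h).symm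
      have hsi : (pt (-s) (a (f i) * (-s) + b (f i))) ∈ L (f i) :=
        (graph (f i) (hfv i) _).mpr (by simp only [pt_zero, pt_one])
      have hti : (pt (-t) (a (f i) * (-t) + b (f i))) ∈ L (f i) :=
        (graph (f i) (hfv i) _).mpr (by simp only [pt_zero, pt_one])
      have h1 := hcross' (f i) (f j) hfij (hfv i) (hfv j) _ hsi hs
      have h2 := hcross' (f i) (f k) hfik (hfv i) (hfv k) _ hti ht
      simp only [pt_zero] at h1 h2
      have hord := chn_ord hσ'symm hBtwn hg i.val j.val k.val i.isLt j.isLt k.isLt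
        hjk (fun h => hji (Fin.ext h)) (fun h => hki (Fin.ext h))
      rw [hσ'] at hord
      dsimp only at hord
      rw [hf] at h1 h2
      dsimp only at h1 h2
      linarith
  · -- cap case: parametrize with increasing x-coordinate
    have hgval : ∀ i : Fin m, g i.val < A.card := by
      intro i
      have := hg.2.1 i.val i.isLt
      rwa [Finset.mem_range] at this
    set f : Fin m → Fin (n0+1) := fun i => idx (g i.val) with hf
    have hfinj : Function.Injective f := by
      intro i j hij
      by_contra hne
      rcases Ne.lt_or_gt hne with h | h
      · exact hidxne _ _ (hg.1 _ _ h (Fin.is_lt j)) (hgval j) hij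
      · exact hidxne _ _ (hg.1 _ _ h (Fin.is_lt i)) (hgval i) hij.symm
    have hfv : ∀ i, v (f i) 0 ≠ 0 := fun i => hidxv _ (hgval i)
    refine ⟨f, hfinj, fun i t' => pt t' (a (f i) * t' + b (f i)), ?_, ?_⟩
    · intro i
      refine ⟨?_, ⟨pt 0 (b (f i)), pt 1 (a (f i)), fun t => e2_ext ?_ ?_⟩, ?_⟩
      · intro s t hst
        have := congrArg (fun z : E2 => z 0) hst
        simp only [pt_zero] at this
        exact this
      · rw [e2_apply]; simp only [pt_zero]; ring
      · rw [e2_apply]; simp only [pt_one]; ring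
      · ext z
        simp only [Set.mem_range]
        constructor
        · rintro ⟨t, rfl⟩
          rw [graph (f i) (hfv i)]
          simp only [pt_zero, pt_one]
        · intro hz
          refine ⟨z 0, e2_ext ?_ ?_⟩
          · simp only [pt_zero]
          · simp only [pt_one]
            exact ((graph (f i) (hfv i) z).mp hz).symm
    · intro i j k hjk hji hki s t hs ht
      have hfij : f i ≠ f j := fun h => hji (hfinj h).symm
      have hfik : f i ≠ f k := fun h => hki (hfinj h).symm
      have hsi : (pt s (a (f i) * s + b (f i))) ∈ L (f i) :=
        (graph (f i) (hfv i) _).mpr (by simp only [pt_zero, pt_one])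
      have hti : (pt t (a (f i) * t + b (f i))) ∈ L (f i) :=
        (graph (f i) (hfv i) _).mpr (by simp only [pt_zero, pt_one])
      have h1 := hcross' (f i) (f j) hfij (hfv i) (hfv j) _ hsi hs
      have h2 := hcross' (f i) (f k) hfik (hfv i) (hfv k) _ hti ht
      simp only [pt_zero] at h1 h2
      have hord := chn_ord' hσ'symm hBtwn hg i.val j.val k.val i.isLt j.isLt k.isLt
        hjk (fun h => hji (Fin.ext h)) (fun h => hki (Fin.ext h))
      rw [hσ'] at hord
      dsimp only at hord
      rw [hf] at h1 h2
      dsimp only at h1 h2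
      linarith
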